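/- arXiv:0911.2751 — 2 statements merged into one kernel-verified Lean document; each statement's English description precedes it below -/
import Mathlib

section
/- Let 𝔛 be a Hilbert module over a unital C*-algebra 𝔄, and e₁,…,e_m ∈ 𝔛 with ⟨eᵢ,eⱼ⟩ = 0 for i ≠ j and |eₖ| ≤ 1 (i.e. ⟨eₖ,eₖ⟩ ≤ 1). Let x₁,…,xₙ ∈ 𝔛 and M_{jk} ≥ 0 be real scalars such that ‖xⱼ‖·1 − Re⟨eₖ,xⱼ⟩ ≤ M_{jk}·1 in 𝔄 for all 1 ≤ j ≤ n, 1 ≤ k ≤ m. Then ∑ⱼ‖xⱼ‖ ≤ (1/√m)‖∑ⱼ xⱼ‖ + (1/m)∑ⱼ∑ₖ M_{jk}. -/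
open scoped RightActions

/-- Hermitian real part of an element of a complex *-algebra. -/
noncomputable def cre {A : Type*} [Ring A] [StarRing A] [Module ℂ A] (a : A) : A :=
  (2 : ℂ)⁻¹ • (a + star a)

/-- Hermitian imaginary part of an element of a complex *-algebra. -/
noncomputable def cim {A : Type*} [Ring A] [StarRing A] [Module ℂ A] (a : A) : A :=
  (2 * Complex.I)⁻¹ • (a - star a)

/-- The December 2024 Mathlib `CStarModule` (right `A`-module, via `Aᵐᵒᵖ`), restated with its
old axioms, since Mathlib's `CStarModule` now describes left modules. -/
class CStarModuleOld (A E : Type*) [NonUnitalSemiring A] [StarRing A] [Module ℂ A]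
    [AddCommGroup E] [Module ℂ E] [PartialOrder A] [SMul Aᵐᵒᵖ E] [Norm A] [Norm E]
    extends Inner A E where
  inner_add_right {x} {y} {z} : inner x (y + z) = inner x y + inner x z
  inner_self_nonneg {x} : 0 ≤ inner x x
  inner_self {x} : inner x x = 0 ↔ x = 0
  inner_op_smul_right {a : A} {x y : E} : inner x (y <• a) = inner x y * a
  inner_smul_right_complex {z : ℂ} {x} {y} : inner x (z • y) = z • inner x y
  star_inner x y : star (inner x y) = inner y x
  norm_eq_sqrt_norm_inner_self x : ‖x‖ = √‖inner x x‖

section aux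
variable {A : Type*} [CStarAlgebra A] [PartialOrder A] [StarOrderedRing A]

lemma cre_isSelfAdjoint (a : A) : IsSelfAdjoint (cre a) := by
  unfold cre
  rw [IsSelfAdjoint, star_smul, star_add, star_star, add_comm]
  norm_num

lemma norm_cre_le (a : A) : ‖cre a‖ ≤ ‖a‖ := by
  unfold cre
  rw [norm_smul]
  calc ‖(2:ℂ)⁻¹‖ * ‖a + star a‖ ≤ ‖(2:ℂ)⁻¹‖ * (‖a‖ + ‖star a‖) := by
        gcongr; exact norm_add_le _ _
    _ = ‖a‖ := by rw [norm_star]; simp; ring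

lemma cre_le_norm (a : A) : cre a ≤ ‖a‖ • (1 : A) := by
  calc cre a ≤ algebraMap ℝ A ‖cre a‖ :=
        IsSelfAdjoint.le_algebraMap_norm_self (cre_isSelfAdjoint a)
    _ = ‖cre a‖ • 1 := Algebra.algebraMap_eq_smul_one _
    _ ≤ ‖a‖ • 1 := by
        rw [← sub_nonneg, ← sub_smul]
        exact smul_nonneg (by linarith [norm_cre_le a]) zero_le_one

lemma cre_add (a b : A) : cre (a + b) = cre a + cre b := by
  unfold cre; rw [star_add]; module

lemma cre_sum {ι : Type*} (s : Finset ι) (f : ι → A) :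
    cre (∑ i ∈ s, f i) = ∑ i ∈ s, cre (f i) := by
  classical
  induction s using Finset.induction with
  | empty => simp [cre]
  | insert a s h ih => rw [Finset.sum_insert h, Finset.sum_insert h, cre_add, ih]

lemma smul_one_le_smul_one [Nontrivial A] {r t : ℝ} (h : r • (1 : A) ≤ t • 1) : r ≤ t := by
  have h0 : (0 : A) ≤ (t - r) • 1 := by
    rw [sub_smul]; exact sub_nonneg.mpr h
  have hmem : (t - r) ∈ spectrum ℝ ((t - r) • (1 : A)) := by
    rw [← Algebra.algebraMap_eq_smul_one, spectrum.scalar_eq]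
    exact Set.mem_singleton _
  linarith [spectrum_nonneg_of_nonneg h0 hmem]

end aux

namespace CStarModuleOld

section general
variable {A E : Type*} [NonUnitalRing A] [StarRing A] [AddCommGroup E] [Module ℂ A]
  [Module ℂ E] [PartialOrder A] [SMul Aᵐᵒᵖ E] [Norm A] [Norm E] [CStarModuleOld A E]

lemma inner_add_left' {x y z : E} : inner A (x + y) z = inner A x z + inner A y z := by
  rw [← star_star (r := inner A (x + y) z)]
  simp only [← CStarModuleOld.star_inner z, CStarModuleOld.inner_add_right, star_add, star_star]

lemma inner_op_smul_left' {a : A} {x y : E} : inner A (x <• a) y = star a * inner A x y := by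
  rw [← CStarModuleOld.star_inner, CStarModuleOld.inner_op_smul_right, star_mul,
    CStarModuleOld.star_inner]

variable [StarModule ℂ A]

lemma inner_smul_left_complex' {z : ℂ} {x y : E} : inner A (z • x) y = star z • inner A x y := by
  rw [← CStarModuleOld.star_inner, CStarModuleOld.inner_smul_right_complex, star_smul,
    CStarModuleOld.star_inner]

lemma inner_smul_left_real' {z : ℝ} {x y : E} : inner A (z • x) y = z • inner A x y := by
  have h₁ : z • x = (z : ℂ) • x := by simp
  rw [h₁, inner_smul_left_complex']
  simp

lemma inner_smul_right_real' {z : ℝ} {x y : E} : inner A x (z • y) = z • inner A x y := by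
  have h₁ : z • y = (z : ℂ) • y := by simp
  rw [h₁, CStarModuleOld.inner_smul_right_complex]
  simp

def innerₛₗ' : E →ₗ⋆[ℂ] E →ₗ[ℂ] A where
  toFun x := { toFun := fun y => inner A x y
               map_add' := fun z y => CStarModuleOld.inner_add_right
               map_smul' := fun z y => CStarModuleOld.inner_smul_right_complex }
  map_add' z y := by ext; exact inner_add_left'
  map_smul' z y := by ext; exact inner_smul_left_complex'

lemma innerₛₗ'_apply {x y : E} : innerₛₗ' (A := A) x y = inner A x y := rfl

lemma inner_sub_right' {x y z : E} : inner A x (y - z) = inner A x y - inner A x z := by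
  simp only [← innerₛₗ'_apply, map_sub]
lemma inner_sub_left' {x y z : E} : inner A (x - y) z = inner A x z - inner A y z := by
  simp only [← innerₛₗ'_apply, map_sub, LinearMap.sub_apply]
lemma inner_zero_left' {x : E} : inner A (0 : E) x = 0 := by
  simp only [← innerₛₗ'_apply, map_zero, LinearMap.zero_apply]

lemma inner_sum_right {ι : Type*} {s : Finset ι} {x : E} {y : ι → E} :
    inner A x (∑ i ∈ s, y i) = ∑ i ∈ s, inner A x (y i) :=
  map_sum (innerₛₗ' x) ..

lemma inner_sum_left {ι : Type*} {s : Finset ι} {x : ι → E} {y : E} :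
    inner A (∑ i ∈ s, x i) y = ∑ i ∈ s, inner A (x i) y :=
  map_sum ((innerₛₗ' (A := A)).flip y) ..

end general

lemma norm_nonneg' (A : Type*) {E : Type*} [CStarAlgebra A] [PartialOrder A] [AddCommGroup E] [Module ℂ E]
    [SMul Aᵐᵒᵖ E] [Norm E] [CStarModuleOld A E] {x : E} : 0 ≤ ‖x‖ := by
  rw [CStarModuleOld.norm_eq_sqrt_norm_inner_self (A := A)]; positivity

lemma norm_pos' (A : Type*) {E : Type*} [CStarAlgebra A] [PartialOrder A] [AddCommGroup E] [Module ℂ E]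
    [SMul Aᵐᵒᵖ E] [Norm E] [CStarModuleOld A E] {x : E} (hx : x ≠ 0) : 0 < ‖x‖ := by
  rw [CStarModuleOld.norm_eq_sqrt_norm_inner_self (A := A), Real.sqrt_pos, norm_pos_iff]
  intro H
  rw [CStarModuleOld.inner_self] at H
  exact hx H

section norm
variable {A E : Type*} [CStarAlgebra A] [PartialOrder A] [StarOrderedRing A]
    [AddCommGroup E] [Module ℂ E] [SMul Aᵐᵒᵖ E] [Norm E] [CStarModuleOld A E]

lemma inner_mul_inner_swap_le' {x y : E} :
    inner A y x * inner A x y ≤ ‖x‖ ^ 2 • inner A y y := by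
  rcases eq_or_ne x 0 with h | h
  · subst h
    rw [inner_zero_left', ← CStarModuleOld.star_inner, inner_zero_left', star_zero, zero_mul]
    exact smul_nonneg (sq_nonneg _) CStarModuleOld.inner_self_nonneg
  · have h₁ : ∀ (a : A),
        (0 : A) ≤ ‖x‖ ^ 2 • (star a * a) - ‖x‖ ^ 2 • (star a * inner A x y)
                  - ‖x‖ ^ 2 • (inner A y x * a) + ‖x‖ ^ 2 • (‖x‖ ^ 2 • inner A y y) := fun a => by
      calc (0 : A) ≤ inner A (x <• a - ‖x‖ ^ 2 • y) (x <• a - ‖x‖ ^ 2 • y) := by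
                      exact CStarModuleOld.inner_self_nonneg
            _ = star a * inner A x x * a - ‖x‖ ^ 2 • (star a * inner A x y)
                  - ‖x‖ ^ 2 • (inner A y x * a) + ‖x‖ ^ 2 • (‖x‖ ^ 2 • inner A y y) := by
                      simp only [inner_sub_right', CStarModuleOld.inner_op_smul_right,
                        inner_sub_left', inner_op_smul_left', inner_smul_left_real', sub_mul,
                        smul_mul_assoc, mul_smul_comm, inner_smul_right_real', smul_sub, mul_assoc]
                      abel
            _ ≤ ‖x‖ ^ 2 • (star a * a) - ‖x‖ ^ 2 • (star a * inner A x y)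
                  - ‖x‖ ^ 2 • (inner A y x * a) + ‖x‖ ^ 2 • (‖x‖ ^ 2 • inner A y y) := by
                      gcongr
                      calc _ ≤ ‖inner A x x‖ • (star a * a) :=
                          CStarAlgebra.star_left_conjugate_le_norm_smul (hb := CStarModuleOld.star_inner x x)
                        _ = (√‖inner A x x‖) ^ 2 • (star a * a) := by
                          rw [Real.sq_sqrt]
                          positivity
                        _ = ‖x‖ ^ 2 • (star a * a) := by
                          rw [← CStarModuleOld.norm_eq_sqrt_norm_inner_self]
    specialize h₁ (inner A x y)
    simp only [CStarModuleOld.star_inner, sub_self, zero_sub, le_neg_add_iff_add_le,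
      add_zero] at h₁
    rwa [smul_le_smul_iff_of_pos_left (pow_pos (norm_pos' A h) _)] at h₁

lemma norm_inner_le' {x y : E} : ‖inner A x y‖ ≤ ‖x‖ * ‖y‖ := by
  have := calc ‖inner A x y‖ ^ 2 = ‖inner A y x * inner A x y‖ := by
                rw [← CStarModuleOld.star_inner x, CStarRing.norm_star_mul_self, pow_two]
    _ ≤ ‖‖x‖ ^ 2 • inner A y y‖ := by
                refine CStarAlgebra.norm_le_norm_of_nonneg_of_le ?_ inner_mul_inner_swap_le'
                rw [← CStarModuleOld.star_inner x]
                exact star_mul_self_nonneg (inner A x y)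
    _ = ‖x‖ ^ 2 * ‖inner A y y‖ := by simp [norm_smul]
    _ = ‖x‖ ^ 2 * ‖y‖ ^ 2 := by
                simp only [CStarModuleOld.norm_eq_sqrt_norm_inner_self (A := A) y, norm_nonneg,
                  Real.sq_sqrt]
    _ = (‖x‖ * ‖y‖) ^ 2 := by simp only [mul_pow]
  refine (pow_le_pow_iff_left₀ (norm_nonneg (inner A x y)) ?_ (by simp)).mp this
  exact mul_nonneg (norm_nonneg' A) (norm_nonneg' A)

end norm
end CStarModuleOld

theorem stmt8 {A E : Type*} [CStarAlgebra A] [PartialOrder A] [StarOrderedRing A]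
    [AddCommGroup E] [Module ℂ E] [SMul Aᵐᵒᵖ E] [Norm E] [CStarModuleOld A E]
    (m n : ℕ) (hm : 0 < m) (e : Fin m → E) (x : Fin n → E)
    (horth : ∀ i j, i ≠ j → (inner A (e i) (e j) : A) = 0)
    (he : ∀ k, (inner A (e k) (e k) : A) ≤ 1)
    (M : Fin n → Fin m → ℝ) (hM : ∀ j k, 0 ≤ M j k)
    (h : ∀ j k, ‖x j‖ • (1 : A) - cre (inner A (e k) (x j) : A) ≤ (M j k) • (1 : A)) :
    ∑ j, ‖x j‖ ≤ (1 / Real.sqrt m) * ‖∑ j, x j‖ + (1 / m) * ∑ j, ∑ k, M j k := by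
  rcases subsingleton_or_nontrivial A with hA | hA
  · have hnorm : ∀ y : E, ‖y‖ = 0 := fun y => by
      rw [CStarModuleOld.norm_eq_sqrt_norm_inner_self (A := A),
        Subsingleton.elim (inner A y y : A) 0, norm_zero, Real.sqrt_zero]
    simp only [hnorm]
    rw [Finset.sum_const, smul_zero, mul_zero, zero_add]
    have hT : 0 ≤ ∑ j, ∑ k, M j k :=
      Finset.sum_nonneg fun j _ => Finset.sum_nonneg fun k _ => hM j k
    positivity
  · set f : E := ∑ k, e k with hf
    set s : E := ∑ j, x j with hs
    have hmpos : (0:ℝ) < m := by exact_mod_cast hm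
    have hsq : Real.sqrt m * Real.sqrt m = m := Real.mul_self_sqrt hmpos.le
    have hsqpos : 0 < Real.sqrt m := Real.sqrt_pos.mpr hmpos
    -- inner A f f ≤ m • 1
    have hff : (inner A f f : A) ≤ (m : ℝ) • 1 := by
      have hdiag : (inner A f f : A) = ∑ k, (inner A (e k) (e k) : A) := by
        rw [hf, CStarModuleOld.inner_sum_left]
        refine Finset.sum_congr rfl fun i _ => ?_
        rw [CStarModuleOld.inner_sum_right]
        exact Finset.sum_eq_single_of_mem i (Finset.mem_univ i)
          (fun j _ hj => horth i j (Ne.symm hj))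
      rw [hdiag]
      calc ∑ k, (inner A (e k) (e k) : A) ≤ ∑ _k : Fin m, (1 : A) :=
            Finset.sum_le_sum fun k _ => he k
        _ = (m : ℝ) • 1 := by simp [← Nat.cast_smul_eq_nsmul ℝ]
    have hfn : ‖f‖ ≤ Real.sqrt m := by
      rw [CStarModuleOld.norm_eq_sqrt_norm_inner_self (A := A)]
      have h1 : ‖(inner A f f : A)‖ ≤ (m : ℝ) := by
        calc ‖(inner A f f : A)‖ ≤ ‖(m : ℝ) • (1 : A)‖ :=
              CStarAlgebra.norm_le_norm_of_nonneg_of_le CStarModuleOld.inner_self_nonneg hff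
          _ = (m : ℝ) := by rw [norm_smul, norm_one, mul_one, Real.norm_of_nonneg hmpos.le]
      exact Real.sqrt_le_sqrt h1
    -- key summed inequality
    have hkey : ((m : ℝ) * ∑ j, ‖x j‖) • (1 : A) - cre (inner A f s : A)
        ≤ (∑ j, ∑ k, M j k) • 1 := by
      have hcre : cre (inner A f s : A) = ∑ j, ∑ k, cre (inner A (e k) (x j) : A) := by
        rw [hf, hs, CStarModuleOld.inner_sum_right, cre_sum]
        refine Finset.sum_congr rfl fun j _ => ?_
        rw [CStarModuleOld.inner_sum_left, cre_sum]
      rw [hcre]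
      have := Finset.sum_le_sum (fun j (_ : j ∈ Finset.univ) =>
        Finset.sum_le_sum (fun k (_ : k ∈ (Finset.univ : Finset (Fin m))) => h j k))
      calc ((m : ℝ) * ∑ j, ‖x j‖) • (1 : A) - ∑ j, ∑ k, cre (inner A (e k) (x j) : A)
          = ∑ j, ∑ k, (‖x j‖ • (1 : A) - cre (inner A (e k) (x j) : A)) := by
            simp only [Finset.sum_sub_distrib]
            congr 1
            rw [Finset.mul_sum, Finset.sum_smul]
            refine Finset.sum_congr rfl fun i _ => ?_
            rw [Finset.sum_const, Finset.card_univ, Fintype.card_fin, mul_comm, mul_smul,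
              ← Nat.cast_smul_eq_nsmul ℝ m ((‖x i‖ : ℝ) • (1 : A)), smul_comm]
        _ ≤ ∑ j, ∑ k, (M j k) • (1 : A) := this
        _ = (∑ j, ∑ k, M j k) • 1 := by simp [Finset.sum_smul]
    have hcre_bound : cre (inner A f s : A) ≤ (Real.sqrt m * ‖s‖) • 1 := by
      calc cre (inner A f s : A) ≤ ‖(inner A f s : A)‖ • 1 := cre_le_norm _
        _ ≤ (Real.sqrt m * ‖s‖) • 1 := by
            rw [← sub_nonneg, ← sub_smul]
            refine smul_nonneg ?_ zero_le_one
            have := CStarModuleOld.norm_inner_le' (A := A) (x := f) (y := s)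
            have hns : 0 ≤ ‖s‖ := by
              rw [CStarModuleOld.norm_eq_sqrt_norm_inner_self (A := A)]; positivity
            nlinarith [mul_le_mul_of_nonneg_right hfn hns]
    have hfinal : ((m : ℝ) * ∑ j, ‖x j‖) • (1 : A)
        ≤ (Real.sqrt m * ‖s‖ + ∑ j, ∑ k, M j k) • 1 := by
      rw [add_smul]
      calc ((m : ℝ) * ∑ j, ‖x j‖) • (1 : A)
          ≤ (∑ j, ∑ k, M j k) • 1 + cre (inner A f s : A) := sub_le_iff_le_add.mp hkey
        _ ≤ (∑ j, ∑ k, M j k) • 1 + (Real.sqrt m * ‖s‖) • 1 := add_le_add (le_refl _) hcre_bound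
        _ = (Real.sqrt m * ‖s‖) • 1 + (∑ j, ∑ k, M j k) • (1:A) := add_comm _ _
    have hscalar := smul_one_le_smul_one hfinal
    have h1 : ∑ j, ‖x j‖ ≤ (Real.sqrt m * ‖s‖ + ∑ j, ∑ k, M j k) / m := by
      rw [le_div_iff₀ hmpos]; linarith [hscalar]
    have h2 : (Real.sqrt m * ‖s‖ + ∑ j, ∑ k, M j k) / m
        = 1 / Real.sqrt m * ‖s‖ + 1 / (m:ℝ) * ∑ j, ∑ k, M j k := by
      field_simp
      linear_combination ‖s‖ * hsq
    rw [← h2]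
    exact h1
end

section
/- Let 𝔛 be a Hilbert module over a C*-algebra 𝔄, and let e₁,…,eₙ ∈ 𝔛 satisfy ⟨eᵢ,eⱼ⟩ = 0 for i ≠ j and ‖eᵢ‖ = 1. Then for every x ∈ 𝔛, |x − ∑ₖ eₖ·⟨eₖ,x⟩|² ≤ |x|² − ∑ₖ|⟨eₖ,x⟩|² in the order of 𝔄. -/
open scoped RightActions

/-- The December 2024 Mathlib `CStarModule` (right Hilbert module, `Aᵐᵒᵖ` acting on the right),
restated under a new name since Mathlib's `CStarModule` is now a left module. -/
class RightCStarModule (A E : Type*) [NonUnitalSemiring A] [StarRing A] [Module ℂ A]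
    [AddCommGroup E] [Module ℂ E] [PartialOrder A] [SMul Aᵐᵒᵖ E] [Norm A] [Norm E]
    extends Inner A E where
  inner_add_right {x} {y} {z} : inner x (y + z) = inner x y + inner x z
  inner_self_nonneg {x} : 0 ≤ inner x x
  inner_self {x} : inner x x = 0 ↔ x = 0
  inner_op_smul_right {a : A} {x y : E} : inner x (y <• a) = inner x y * a
  inner_smul_right_complex {z : ℂ} {x} {y} : inner x (z • y) = z • inner x y
  star_inner x y : star (inner x y) = inner y x
  norm_eq_sqrt_norm_inner_self x : ‖x‖ = Real.sqrt ‖inner x x‖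

namespace RightCStarModule

theorem inner_zero_right' {A E : Type*} [CStarAlgebra A] [PartialOrder A] [StarOrderedRing A]
    [AddCommGroup E] [Module ℂ E] [SMul Aᵐᵒᵖ E] [Norm E] [RightCStarModule A E] (x : E) :
    inner A x (0 : E) = 0 := by
  have h := RightCStarModule.inner_add_right (A := A) (x := x) (y := (0 : E)) (z := 0)
  rw [add_zero] at h
  simpa using h

theorem inner_neg_right' {A E : Type*} [CStarAlgebra A] [PartialOrder A] [StarOrderedRing A]
    [AddCommGroup E] [Module ℂ E] [SMul Aᵐᵒᵖ E] [Norm E] [RightCStarModule A E] (x y : E) :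
    inner A x (-y) = -inner A x y := by
  have h := RightCStarModule.inner_add_right (A := A) (x := x) (y := y) (z := -y)
  rw [add_neg_cancel, inner_zero_right'] at h
  exact (neg_eq_of_add_eq_zero_right h.symm).symm

theorem inner_sub_right {A E : Type*} [CStarAlgebra A] [PartialOrder A] [StarOrderedRing A]
    [AddCommGroup E] [Module ℂ E] [SMul Aᵐᵒᵖ E] [Norm E] [RightCStarModule A E] {x y z : E} :
    inner A x (y - z) = inner A x y - inner A x z := by
  rw [sub_eq_add_neg, RightCStarModule.inner_add_right, inner_neg_right', ← sub_eq_add_neg]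

theorem inner_sub_left {A E : Type*} [CStarAlgebra A] [PartialOrder A] [StarOrderedRing A]
    [AddCommGroup E] [Module ℂ E] [SMul Aᵐᵒᵖ E] [Norm E] [RightCStarModule A E] {x y z : E} :
    inner A (x - y) z = inner A x z - inner A y z := by
  rw [← RightCStarModule.star_inner, inner_sub_right, star_sub, RightCStarModule.star_inner,
    RightCStarModule.star_inner]

theorem inner_sum_right {A E : Type*} [CStarAlgebra A] [PartialOrder A] [StarOrderedRing A]
    [AddCommGroup E] [Module ℂ E] [SMul Aᵐᵒᵖ E] [Norm E] [RightCStarModule A E] {ι : Type*}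
    {s : Finset ι} {x : E} {f : ι → E} :
    inner A x (∑ i ∈ s, f i) = ∑ i ∈ s, inner A x (f i) :=
  map_sum (AddMonoidHom.mk' (fun y : E => (inner A x y : A))
    (fun _ _ => RightCStarModule.inner_add_right)) f s

theorem inner_sum_left {A E : Type*} [CStarAlgebra A] [PartialOrder A] [StarOrderedRing A]
    [AddCommGroup E] [Module ℂ E] [SMul Aᵐᵒᵖ E] [Norm E] [RightCStarModule A E] {ι : Type*}
    {s : Finset ι} {x : E} {f : ι → E} :
    inner A (∑ i ∈ s, f i) x = ∑ i ∈ s, inner A (f i) x := by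
  rw [← RightCStarModule.star_inner, inner_sum_right, star_sum]
  simp only [RightCStarModule.star_inner]

theorem inner_op_smul_left {A E : Type*} [CStarAlgebra A] [PartialOrder A] [StarOrderedRing A]
    [AddCommGroup E] [Module ℂ E] [SMul Aᵐᵒᵖ E] [Norm E] [RightCStarModule A E]
    {a : A} {x y : E} :
    inner A (x <• a) y = star a * inner A x y := by
  rw [← RightCStarModule.star_inner, RightCStarModule.inner_op_smul_right, star_mul,
    RightCStarModule.star_inner]

end RightCStarModule

theorem stmt17 {A E : Type*} [CStarAlgebra A] [PartialOrder A] [StarOrderedRing A]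
    [AddCommGroup E] [Module ℂ E] [SMul Aᵐᵒᵖ E] [Norm E] [RightCStarModule A E]
    (n : ℕ) (e : Fin n → E) (horth : ∀ i j, i ≠ j → (inner A (e i) (e j) : A) = 0)
    (hnorm : ∀ i, ‖e i‖ = 1) (x : E) :
    (inner A (x - ∑ k, e k <• (inner A (e k) x : A)) (x - ∑ k, e k <• (inner A (e k) x : A)) : A) ≤
      (inner A x x : A) - ∑ k, star (inner A (e k) x : A) * inner A (e k) x := by
  set a : Fin n → A := fun k => inner A (e k) x with ha
  have hxy : (inner A x (∑ k, e k <• a k) : A) = ∑ k, star (a k) * a k := by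
    rw [RightCStarModule.inner_sum_right]
    refine Finset.sum_congr rfl fun k _ => ?_
    rw [RightCStarModule.inner_op_smul_right, ← RightCStarModule.star_inner (A := A) (e k) x]
  have hyx : (inner A (∑ k, e k <• a k) x : A) = ∑ k, star (a k) * a k := by
    rw [RightCStarModule.inner_sum_left]
    refine Finset.sum_congr rfl fun k _ => ?_
    rw [RightCStarModule.inner_op_smul_left]
  have hyy : (inner A (∑ k, e k <• a k) (∑ k, e k <• a k) : A)
      = ∑ k, star (a k) * (inner A (e k) (e k) : A) * a k := by
    rw [RightCStarModule.inner_sum_left]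
    refine Finset.sum_congr rfl fun k _ => ?_
    rw [RightCStarModule.inner_sum_right, Finset.sum_eq_single k]
    · rw [RightCStarModule.inner_op_smul_left, RightCStarModule.inner_op_smul_right, mul_assoc]
    · intro j _ hj
      rw [RightCStarModule.inner_op_smul_left, RightCStarModule.inner_op_smul_right,
        horth k j (Ne.symm hj)]
      simp
    · simp
  have key : ∑ k, star (a k) * (inner A (e k) (e k) : A) * a k ≤ ∑ k, star (a k) * a k := by
    refine Finset.sum_le_sum fun k _ => ?_
    have h1 : (inner A (e k) (e k) : A) ≤ 1 := by
      rw [← CStarAlgebra.norm_le_one_iff_of_nonneg _ RightCStarModule.inner_self_nonneg]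
      have := RightCStarModule.norm_eq_sqrt_norm_inner_self (A := A) (e k)
      rw [hnorm k] at this
      nlinarith [norm_nonneg (inner A (e k) (e k) : A),
        Real.sq_sqrt (norm_nonneg (inner A (e k) (e k) : A))]
    calc star (a k) * (inner A (e k) (e k) : A) * a k
        ≤ star (a k) * 1 * a k := star_left_conjugate_le_conjugate h1 _
      _ = star (a k) * a k := by rw [mul_one]
  calc (inner A (x - ∑ k, e k <• a k) (x - ∑ k, e k <• a k) : A)
      = (inner A x x : A) - (∑ k, star (a k) * a k) - (∑ k, star (a k) * a k)
          + ∑ k, star (a k) * (inner A (e k) (e k) : A) * a k := by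
        rw [RightCStarModule.inner_sub_left, RightCStarModule.inner_sub_right,
          RightCStarModule.inner_sub_right, hxy, hyx, hyy]; abel
    _ ≤ (inner A x x : A) - (∑ k, star (a k) * a k) - (∑ k, star (a k) * a k)
          + ∑ k, star (a k) * a k := by gcongr
    _ = (inner A x x : A) - ∑ k, star (a k) * a k := by abel
end
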